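/- Let x_1, ..., x_g be variables, p_k the k-th power sum and e_k the k-th elementary symmetric polynomial in ℚ[x_1,...,x_g]. Modulo the ideal generated by the even power sums p_2, p_4, p_6, ..., one has the identity e_{g-1} · e_g ≡ (-1)^{g-1} p_{2g-1}. -/

import Mathlib

open MvPolynomial

private lemma tri_swap {M : Type*} [AddCommMonoid M] (n : ℕ) (f : ℕ → ℕ → M) :
    ∑ j ∈ Finset.range (n + 1), ∑ i ∈ Finset.range j, f i (j - i)
      = ∑ c ∈ Finset.range n, ∑ i ∈ Finset.range (n - c), f i (c + 1) := by
  rw [Finset.sum_sigma', Finset.sum_sigma']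
  refine Finset.sum_nbij'
    (fun x : (_ : ℕ) × ℕ => (⟨x.1 - x.2 - 1, x.2⟩ : (_ : ℕ) × ℕ))
    (fun x : (_ : ℕ) × ℕ => (⟨x.2 + x.1 + 1, x.2⟩ : (_ : ℕ) × ℕ)) ?_ ?_ ?_ ?_ ?_ <;>
    simp only [Finset.mem_sigma, Finset.mem_range, Sigma.forall, and_imp]
  · intro a b h1 h2; omega
  · intro a b h1 h2; omega
  · intro a b h1 h2
    have hx : b + (a - b - 1) + 1 = a := by omega
    rw [hx]
  · intro a b h1 h2
    have hx : b + a + 1 - b - 1 = a := by omega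
    rw [hx]
  · intro a b h1 h2
    have : a - b - 1 + 1 = a - b := by omega
    rw [this]

private lemma esymm_zero_of_gt {g n : ℕ} (h : g < n) : esymm (Fin g) ℚ n = 0 := by
  rw [esymm, Finset.powersetCard_eq_empty.2 (by simpa using h), Finset.sum_empty]

private lemma psum_mem (g k : ℕ) (hk : 0 < k) (hek : Even k) :
    psum (Fin g) ℚ k ∈ Ideal.span {p : MvPolynomial (Fin g) ℚ |
      ∃ k : ℕ, 0 < k ∧ Even k ∧ p = psum (Fin g) ℚ k} :=
  Ideal.subset_span ⟨k, hk, hek, rfl⟩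

private lemma esymm_mem_psum_span (g r : ℕ) (hr : 0 < r) :
    esymm (Fin g) ℚ r ∈ Ideal.span {p : MvPolynomial (Fin g) ℚ |
      ∃ k : ℕ, 0 < k ∧ p = psum (Fin g) ℚ k} := by
  have newton := MvPolynomial.mul_esymm_eq_sum (Fin g) ℚ r
  have hmem : (r : MvPolynomial (Fin g) ℚ) * esymm (Fin g) ℚ r ∈
      Ideal.span {p : MvPolynomial (Fin g) ℚ | ∃ k : ℕ, 0 < k ∧ p = psum (Fin g) ℚ k} := by
    rw [newton]
    refine Ideal.mul_mem_left _ _ (Ideal.sum_mem _ fun a ha => ?_)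
    simp only [Finset.mem_filter, Finset.HasAntidiagonal.mem_antidiagonal] at ha
    exact Ideal.mul_mem_left _ _ (Ideal.subset_span ⟨a.2, by omega, rfl⟩)
  have key : esymm (Fin g) ℚ r
      = C ((r : ℚ)⁻¹) * ((r : MvPolynomial (Fin g) ℚ) * esymm (Fin g) ℚ r) := by
    have : ((r : ℕ) : MvPolynomial (Fin g) ℚ) = C ((r : ℚ)) := by
      simp [MvPolynomial.C_eq_coe_nat]
    rw [this, ← mul_assoc, ← C_mul, inv_mul_cancel₀ (by exact_mod_cast hr.ne' : (r:ℚ) ≠ 0), C_1,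
      one_mul]
  rw [key]
  exact Ideal.mul_mem_left _ _ hmem

open Polynomial in
private lemma monic_natdeg (g : ℕ) (c : Fin g → MvPolynomial (Fin g) ℚ) :
    (∏ i : Fin g, (Polynomial.X + Polynomial.C (c i))).natDegree = g := by
  have hm : ∀ i : Fin g, (Polynomial.X + Polynomial.C (c i)).Monic := fun i => monic_X_add_C _
  rw [Polynomial.natDegree_prod_of_monic _ _ (fun i _ => hm i)]
  simp [Polynomial.natDegree_X_add_C]

open Polynomial in
private lemma coeff_zero_of_gt (g k : ℕ) (c : Fin g → MvPolynomial (Fin g) ℚ) (hk : g < k) :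
    (∏ i : Fin g, (Polynomial.X + Polynomial.C (c i))).coeff k = 0 := by
  apply Polynomial.coeff_eq_zero_of_natDegree_lt
  rw [monic_natdeg]
  exact hk

open Polynomial in
private lemma coeff_P (g k : ℕ) (hk : k ≤ g) :
    (∏ i : Fin g, (Polynomial.X + Polynomial.C (MvPolynomial.X i :
        MvPolynomial (Fin g) ℚ))).coeff k = esymm (Fin g) ℚ (g - k) := by
  have := MvPolynomial.prod_X_add_C_coeff ℚ (Fin g) (k := k) (by simpa using hk)
  simpa using this

open Polynomial in
private lemma coeff_neg_prod (g k : ℕ) (c : Fin g → MvPolynomial (Fin g) ℚ) (hk : k ≤ g) :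
    (∏ i : Fin g, (Polynomial.X + Polynomial.C (-(c i)))).coeff k
      = (-1) ^ (g - k) * ∑ t ∈ Finset.powersetCard (g - k) Finset.univ, ∏ i ∈ t, c i := by
  rw [Finset.prod_X_add_C_coeff Finset.univ (fun i => -(c i)) (by simpa using hk)]
  simp only [Finset.card_univ, Fintype.card_fin]
  rw [Finset.mul_sum]
  refine Finset.sum_congr rfl fun t ht => ?_
  have hcard : t.card = g - k := (Finset.mem_powersetCard.1 ht).2
  rw [← hcard]
  calc ∏ i ∈ t, -c i = ∏ i ∈ t, (-1 : MvPolynomial (Fin g) ℚ) * c i := by simp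
    _ = (∏ _i ∈ t, (-1 : MvPolynomial (Fin g) ℚ)) * ∏ i ∈ t, c i := Finset.prod_mul_distrib
    _ = (-1) ^ t.card * ∏ i ∈ t, c i := by rw [Finset.prod_const]

private lemma esymm_eq_sum' (g n : ℕ) :
    esymm (Fin g) ℚ n
      = ∑ t ∈ Finset.powersetCard n Finset.univ, ∏ i ∈ t, MvPolynomial.X i := rfl

open Polynomial in
private lemma key_prod (g : ℕ) :
    (∏ i : Fin g, (Polynomial.X + Polynomial.C (MvPolynomial.X i : MvPolynomial (Fin g) ℚ)))
      * (∏ i : Fin g,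
          (Polynomial.X + Polynomial.C (-(MvPolynomial.X i : MvPolynomial (Fin g) ℚ))))
    = Polynomial.expand (MvPolynomial (Fin g) ℚ) 2
        (∏ i : Fin g, (Polynomial.X +
          Polynomial.C (-((MvPolynomial.X i : MvPolynomial (Fin g) ℚ)) ^ 2))) := by
  rw [← Finset.prod_mul_distrib, map_prod]
  refine Finset.prod_congr rfl fun i _ => ?_
  rw [map_add, Polynomial.expand_X, Polynomial.expand_C]
  simp only [map_neg, map_pow]
  ring

private lemma aeval_sq_psum (g k : ℕ) :
    aeval (fun i : Fin g => (MvPolynomial.X i : MvPolynomial (Fin g) ℚ) ^ 2)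
      (psum (Fin g) ℚ k) = psum (Fin g) ℚ (2 * k) := by
  simp [psum, pow_mul, map_sum]

private lemma aeval_sq_esymm (g r : ℕ) :
    aeval (fun i : Fin g => (MvPolynomial.X i : MvPolynomial (Fin g) ℚ) ^ 2)
      (esymm (Fin g) ℚ r)
    = ∑ t ∈ Finset.powersetCard r Finset.univ,
        ∏ i ∈ t, (MvPolynomial.X i : MvPolynomial (Fin g) ℚ) ^ 2 := by
  rw [esymm_eq_sum', map_sum]
  refine Finset.sum_congr rfl fun t _ => ?_
  rw [map_prod]
  simp

private lemma aeval_sq_esymm_mem (g r : ℕ) (hr : 0 < r) :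
    (∑ t ∈ Finset.powersetCard r Finset.univ,
        ∏ i ∈ t, (MvPolynomial.X i : MvPolynomial (Fin g) ℚ) ^ 2)
      ∈ Ideal.span {p : MvPolynomial (Fin g) ℚ |
          ∃ k : ℕ, 0 < k ∧ Even k ∧ p = psum (Fin g) ℚ k} := by
  rw [← aeval_sq_esymm]
  have h := esymm_mem_psum_span g r hr
  have h2 := Ideal.mem_map_of_mem
    (aeval (fun i : Fin g => (MvPolynomial.X i : MvPolynomial (Fin g) ℚ) ^ 2)).toRingHom h
  rw [Ideal.map_span] at h2
  refine Ideal.span_le.2 ?_ h2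
  rintro x ⟨q, ⟨k, hk, rfl⟩, rfl⟩
  have hx : (aeval (fun i : Fin g => (MvPolynomial.X i : MvPolynomial (Fin g) ℚ) ^ 2)).toRingHom
      (psum (Fin g) ℚ k) = psum (Fin g) ℚ (2 * k) := aeval_sq_psum g k
  rw [hx]
  exact Ideal.subset_span ⟨2 * k, by omega, ⟨k, by ring⟩, rfl⟩

private lemma Q_mem (g r : ℕ) (hr : 0 < r) (hrg : r ≤ g) :
    (∑ a ∈ Finset.range (2 * r + 1),
        (-1) ^ a * esymm (Fin g) ℚ a * esymm (Fin g) ℚ (2 * r - a))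
      ∈ Ideal.span {p : MvPolynomial (Fin g) ℚ |
          ∃ k : ℕ, 0 < k ∧ Even k ∧ p = psum (Fin g) ℚ k} := by
  classical
  set P : Polynomial (MvPolynomial (Fin g) ℚ) :=
    ∏ i : Fin g, (Polynomial.X + Polynomial.C (MvPolynomial.X i)) with hP
  set Nn : Polynomial (MvPolynomial (Fin g) ℚ) :=
    ∏ i : Fin g, (Polynomial.X + Polynomial.C (-(MvPolynomial.X i))) with hNn
  have key : (∑ a ∈ Finset.range (2 * r + 1),
      (-1 : MvPolynomial (Fin g) ℚ) ^ a * esymm (Fin g) ℚ a * esymm (Fin g) ℚ (2 * r - a))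
      = (P * Nn).coeff (2 * g - 2 * r) := by
    rw [Polynomial.coeff_mul]
    have hL : (∑ a ∈ Finset.range (2 * r + 1),
        (-1 : MvPolynomial (Fin g) ℚ) ^ a * esymm (Fin g) ℚ a * esymm (Fin g) ℚ (2 * r - a))
        = ∑ x ∈ Finset.HasAntidiagonal.antidiagonal (2 * r),
            (-1 : MvPolynomial (Fin g) ℚ) ^ x.1 * esymm (Fin g) ℚ x.1 * esymm (Fin g) ℚ x.2 :=
      (Finset.Nat.sum_antidiagonal_eq_sum_range_succ_mk
        (fun x : ℕ × ℕ => (-1 : MvPolynomial (Fin g) ℚ) ^ x.1 * esymm (Fin g) ℚ x.1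
          * esymm (Fin g) ℚ x.2) (2 * r)).symm
    rw [hL]
    have h1 : ∀ x ∈ Finset.HasAntidiagonal.antidiagonal (2 * r),
        (-1 : MvPolynomial (Fin g) ℚ) ^ x.1 * esymm (Fin g) ℚ x.1 * esymm (Fin g) ℚ x.2 ≠ 0 →
        x.1 ≤ g ∧ x.2 ≤ g := by
      intro x _ hne
      by_contra hc
      push_neg at hc
      rcases le_or_gt x.1 g with h | h
      · exact hne (by rw [esymm_zero_of_gt (hc h)]; ring)
      · exact hne (by rw [esymm_zero_of_gt h]; ring)
    have h2 : ∀ x ∈ Finset.HasAntidiagonal.antidiagonal (2 * g - 2 * r),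
        P.coeff x.1 * Nn.coeff x.2 ≠ 0 → x.1 ≤ g ∧ x.2 ≤ g := by
      intro x _ hne
      by_contra hc
      push_neg at hc
      rcases le_or_gt x.1 g with h | h
      · exact hne (by rw [hNn, coeff_zero_of_gt g x.2 _ (hc h), mul_zero])
      · exact hne (by rw [hP, coeff_zero_of_gt g x.1 _ h, zero_mul])
    rw [← Finset.sum_filter_of_ne h1, ← Finset.sum_filter_of_ne h2]
    refine Finset.sum_nbij' (fun x : ℕ × ℕ => (g - x.1, g - x.2))
      (fun x : ℕ × ℕ => (g - x.1, g - x.2)) ?_ ?_ ?_ ?_ ?_ <;>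
      simp only [Finset.mem_filter, Finset.HasAntidiagonal.mem_antidiagonal, Prod.mk.injEq, and_imp, Prod.forall]
    · intro a b hab ha hb; omega
    · intro a b hab ha hb; omega
    · intro a b hab ha hb; constructor <;> omega
    · intro a b hab ha hb; constructor <;> omega
    · intro a b hab ha hb
      rw [hP, hNn, coeff_P g (g - a) (by omega), coeff_neg_prod g (g - b) _ (by omega)]
      have e1 : g - (g - a) = a := by omega
      have e2 : g - (g - b) = b := by omega
      rw [e1, e2, ← esymm_eq_sum']
      have hpar : (-1 : MvPolynomial (Fin g) ℚ) ^ a = (-1) ^ b := by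
        rcases Nat.even_or_odd a with h | h
        · have h2 : Even b := Nat.even_iff.2 (by have := Nat.even_iff.1 h; omega)
          rw [h.neg_one_pow, h2.neg_one_pow]
        · have h2 : Odd b := Nat.odd_iff.2 (by have := Nat.odd_iff.1 h; omega)
          rw [h.neg_one_pow, h2.neg_one_pow]
      rw [hpar]
      ring
  rw [key, key_prod g]
  have hdvd : 2 * g - 2 * r = (g - r) * 2 := by omega
  rw [hdvd, Polynomial.coeff_expand_mul two_pos,
    coeff_neg_prod g (g - r) _ (by omega)]
  have e3 : g - (g - r) = r := by omega
  rw [e3]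
  exact Ideal.mul_mem_left _ _ (aeval_sq_esymm_mem g r hr)

/-- Modulo the ideal generated by the even power sums, one has
`e_{g-1} · e_g ≡ (-1)^{g-1} p_{2g-1}` in `ℚ[x_1,...,x_g]`. -/
theorem esymm_mul_esymm_eq_psum_mod_even_psums (g : ℕ) (hg : 1 ≤ g) :
    esymm (Fin g) ℚ (g - 1) * esymm (Fin g) ℚ g -
      (-1 : MvPolynomial (Fin g) ℚ) ^ (g - 1) * psum (Fin g) ℚ (2 * g - 1) ∈
    Ideal.span {p : MvPolynomial (Fin g) ℚ |
      ∃ k : ℕ, 0 < k ∧ Even k ∧ p = psum (Fin g) ℚ k} := by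
  classical
  set I := Ideal.span {p : MvPolynomial (Fin g) ℚ |
    ∃ k : ℕ, 0 < k ∧ Even k ∧ p = psum (Fin g) ℚ k} with hI
  set S : MvPolynomial (Fin g) ℚ :=
    ∑ j ∈ Finset.range (2 * g), (-1 : MvPolynomial (Fin g) ℚ) ^ (2 * g - 1 - j) *
      (j : MvPolynomial (Fin g) ℚ) * esymm (Fin g) ℚ j * esymm (Fin g) ℚ (2 * g - 1 - j) with hS
  -- Step B : evaluate S
  have hsub : ({g - 1, g} : Finset ℕ) ⊆ Finset.range (2 * g) := by
    intro x hx
    simp only [Finset.mem_insert, Finset.mem_singleton] at hx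
    simp only [Finset.mem_range]
    omega
  have hzero : ∀ j ∈ Finset.range (2 * g), j ∉ ({g - 1, g} : Finset ℕ) →
      (-1 : MvPolynomial (Fin g) ℚ) ^ (2 * g - 1 - j) * (j : MvPolynomial (Fin g) ℚ) *
        esymm (Fin g) ℚ j * esymm (Fin g) ℚ (2 * g - 1 - j) = 0 := by
    intro j _ hnot
    simp only [Finset.mem_insert, Finset.mem_singleton, not_or] at hnot
    rcases le_or_gt j g with h | h
    · have hgt : g < 2 * g - 1 - j := by omega
      rw [esymm_zero_of_gt hgt]; ring
    · rw [esymm_zero_of_gt h]; ring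
  have hSval : S = (-1 : MvPolynomial (Fin g) ℚ) ^ (g - 1) *
      esymm (Fin g) ℚ (g - 1) * esymm (Fin g) ℚ g := by
    rw [hS, ← Finset.sum_subset hsub hzero,
      Finset.sum_insert (by simp only [Finset.mem_singleton]; omega), Finset.sum_singleton]
    have e1 : 2 * g - 1 - (g - 1) = g := by omega
    have e2 : 2 * g - 1 - g = g - 1 := by omega
    rw [e1, e2]
    have hpow : (-1 : MvPolynomial (Fin g) ℚ) ^ g = (-1) * (-1) ^ (g - 1) := by
      rcases Nat.even_or_odd g with h | h
      · have h1 : Odd (g - 1) := Nat.odd_iff.2 (by have := Nat.even_iff.1 h; omega)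
        rw [h.neg_one_pow, h1.neg_one_pow]; ring
      · have h1 : Even (g - 1) := Nat.even_iff.2 (by have := Nat.odd_iff.1 h; omega)
        rw [h.neg_one_pow, h1.neg_one_pow]; ring
    have hcast : ((g - 1 : ℕ) : MvPolynomial (Fin g) ℚ) = (g : MvPolynomial (Fin g) ℚ) - 1 := by
      rw [Nat.cast_sub hg, Nat.cast_one]
    linear_combination (((g - 1 : ℕ) : MvPolynomial (Fin g) ℚ) * esymm (Fin g) ℚ (g - 1) *
        esymm (Fin g) ℚ g) * hpow -
      ((-1 : MvPolynomial (Fin g) ℚ) ^ (g - 1) * esymm (Fin g) ℚ (g - 1) *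
        esymm (Fin g) ℚ g) * hcast
  -- Step A : S - p_{2g-1} ∈ I
  set f : ℕ → ℕ → MvPolynomial (Fin g) ℚ := fun i b =>
    (-1 : MvPolynomial (Fin g) ℚ) ^ i * esymm (Fin g) ℚ i *
      (esymm (Fin g) ℚ (2 * g - 1 - i - b) * psum (Fin g) ℚ b) with hf
  have hconv : ∀ j : ℕ,
      (∑ a ∈ Finset.filter (fun a => a.1 < j) (Finset.HasAntidiagonal.antidiagonal j),
        (-1 : MvPolynomial (Fin g) ℚ) ^ a.1 * esymm (Fin g) ℚ a.1 * psum (Fin g) ℚ a.2)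
      = ∑ i ∈ Finset.range j,
          (-1 : MvPolynomial (Fin g) ℚ) ^ i * esymm (Fin g) ℚ i * psum (Fin g) ℚ (j - i) := by
    intro j
    rw [Finset.sum_filter,
      Finset.Nat.sum_antidiagonal_eq_sum_range_succ_mk
        (fun x : ℕ × ℕ => if x.1 < j then (-1 : MvPolynomial (Fin g) ℚ) ^ x.1 *
          esymm (Fin g) ℚ x.1 * psum (Fin g) ℚ x.2 else 0) j,
      Finset.sum_range_succ, if_neg (lt_irrefl j), add_zero]
    exact Finset.sum_congr rfl fun i hi => if_pos (Finset.mem_range.1 hi)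
  have h1 : ∀ j ∈ Finset.range (2 * g),
      (-1 : MvPolynomial (Fin g) ℚ) ^ (2 * g - 1 - j) * (j : MvPolynomial (Fin g) ℚ) *
        esymm (Fin g) ℚ j * esymm (Fin g) ℚ (2 * g - 1 - j)
      = ∑ i ∈ Finset.range j, f i (j - i) := by
    intro j hj
    have hj' : j < 2 * g := Finset.mem_range.1 hj
    have newton := MvPolynomial.mul_esymm_eq_sum (Fin g) ℚ j
    have hsign : (-1 : MvPolynomial (Fin g) ℚ) ^ (2 * g - 1 - j) * (-1) ^ (j + 1) = 1 := by
      rw [← pow_add, show 2 * g - 1 - j + (j + 1) = 2 * g by omega, pow_mul, neg_one_sq, one_pow]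
    calc (-1 : MvPolynomial (Fin g) ℚ) ^ (2 * g - 1 - j) * (j : MvPolynomial (Fin g) ℚ) *
          esymm (Fin g) ℚ j * esymm (Fin g) ℚ (2 * g - 1 - j)
        = ((-1 : MvPolynomial (Fin g) ℚ) ^ (2 * g - 1 - j) * esymm (Fin g) ℚ (2 * g - 1 - j)) *
          ((j : MvPolynomial (Fin g) ℚ) * esymm (Fin g) ℚ j) := by ring
      _ = ((-1 : MvPolynomial (Fin g) ℚ) ^ (2 * g - 1 - j) * esymm (Fin g) ℚ (2 * g - 1 - j)) *
          ((-1) ^ (j + 1) * ∑ a ∈ Finset.filter (fun a => a.1 < j) (Finset.HasAntidiagonal.antidiagonal j),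
            (-1 : MvPolynomial (Fin g) ℚ) ^ a.1 * esymm (Fin g) ℚ a.1 * psum (Fin g) ℚ a.2) := by
          rw [newton]
      _ = ((-1 : MvPolynomial (Fin g) ℚ) ^ (2 * g - 1 - j) * (-1) ^ (j + 1)) *
          (esymm (Fin g) ℚ (2 * g - 1 - j) *
            ∑ a ∈ Finset.filter (fun a => a.1 < j) (Finset.HasAntidiagonal.antidiagonal j),
            (-1 : MvPolynomial (Fin g) ℚ) ^ a.1 * esymm (Fin g) ℚ a.1 * psum (Fin g) ℚ a.2) := by
          ring
      _ = esymm (Fin g) ℚ (2 * g - 1 - j) *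
            ∑ i ∈ Finset.range j,
              (-1 : MvPolynomial (Fin g) ℚ) ^ i * esymm (Fin g) ℚ i * psum (Fin g) ℚ (j - i) := by
          rw [hsign, hconv j, one_mul]
      _ = ∑ i ∈ Finset.range j, f i (j - i) := by
          rw [Finset.mul_sum]
          refine Finset.sum_congr rfl fun i hi => ?_
          have hi' : i < j := Finset.mem_range.1 hi
          simp only [hf]
          have heq : 2 * g - 1 - i - (j - i) = 2 * g - 1 - j := by omega
          rw [heq]
          ring
  have hs2 : S = ∑ c ∈ Finset.range (2 * g - 1), ∑ i ∈ Finset.range (2 * g - 1 - c), f i (c + 1) := by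
    rw [hS]
    rw [Finset.sum_congr rfl h1, show 2 * g = (2 * g - 1) + 1 by omega]
    exact tri_swap (2 * g - 1) f
  have hs3 : S = ∑ c ∈ Finset.range (2 * g - 1),
      (∑ i ∈ Finset.range (2 * g - 1 - c), (-1 : MvPolynomial (Fin g) ℚ) ^ i *
        esymm (Fin g) ℚ i * esymm (Fin g) ℚ (2 * g - 2 - c - i)) * psum (Fin g) ℚ (c + 1) := by
    rw [hs2]
    refine Finset.sum_congr rfl fun c hc => ?_
    rw [Finset.sum_mul]
    refine Finset.sum_congr rfl fun i hi => ?_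
    have hi' : i < 2 * g - 1 - c := Finset.mem_range.1 hi
    simp only [hf]
    have heq : 2 * g - 1 - i - (c + 1) = 2 * g - 2 - c - i := by omega
    rw [heq]
    ring
  have hlast : S = (∑ c ∈ Finset.range (2 * g - 2),
      (∑ i ∈ Finset.range (2 * g - 1 - c), (-1 : MvPolynomial (Fin g) ℚ) ^ i *
        esymm (Fin g) ℚ i * esymm (Fin g) ℚ (2 * g - 2 - c - i)) * psum (Fin g) ℚ (c + 1))
      + psum (Fin g) ℚ (2 * g - 1) := by
    have hsplit : ∀ F : ℕ → MvPolynomial (Fin g) ℚ,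
        ∑ c ∈ Finset.range (2 * g - 1), F c
          = (∑ c ∈ Finset.range (2 * g - 2), F c) + F (2 * g - 2) := by
      intro F
      rw [show 2 * g - 1 = (2 * g - 2) + 1 by omega, Finset.sum_range_succ]
    rw [hs3, hsplit]
    congr 1
    rw [show 2 * g - 1 - (2 * g - 2) = 1 by omega, Finset.sum_range_one,
      show 2 * g - 2 - (2 * g - 2) - 0 = 0 by omega, show (2 * g - 2) + 1 = 2 * g - 1 by omega]
    simp [MvPolynomial.esymm_zero]
  have hmain : S - psum (Fin g) ℚ (2 * g - 1) ∈ I := by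
    rw [hlast, add_sub_cancel_right]
    refine Ideal.sum_mem _ fun c hc => ?_
    have hc' : c < 2 * g - 2 := Finset.mem_range.1 hc
    rcases Nat.even_or_odd (c + 1) with h | h
    · exact Ideal.mul_mem_left _ _ (psum_mem g (c + 1) (by omega) h)
    · have hce : Even c := Nat.even_iff.2 (by have := Nat.odd_iff.1 h; omega)
      obtain ⟨r, hr⟩ := hce
      refine Ideal.mul_mem_right _ _ ?_
      have hQ := Q_mem g (g - 1 - r) (by omega) (by omega)
      have hrange : 2 * g - 1 - c = 2 * (g - 1 - r) + 1 := by omega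
      have hsums : (∑ i ∈ Finset.range (2 * (g - 1 - r) + 1),
          (-1 : MvPolynomial (Fin g) ℚ) ^ i * esymm (Fin g) ℚ i * esymm (Fin g) ℚ (2 * g - 2 - c - i))
          = ∑ i ∈ Finset.range (2 * (g - 1 - r) + 1),
            (-1 : MvPolynomial (Fin g) ℚ) ^ i * esymm (Fin g) ℚ i *
              esymm (Fin g) ℚ (2 * (g - 1 - r) - i) := by
        refine Finset.sum_congr rfl fun i hi => ?_
        have hi' : i < 2 * (g - 1 - r) + 1 := Finset.mem_range.1 hi
        rw [show 2 * g - 2 - c - i = 2 * (g - 1 - r) - i by omega]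
      rw [hrange, hsums]
      exact hQ
  have key : (-1 : MvPolynomial (Fin g) ℚ) ^ (g - 1) * esymm (Fin g) ℚ (g - 1) *
      esymm (Fin g) ℚ g - psum (Fin g) ℚ (2 * g - 1) ∈ I := by
    rw [← hSval]; exact hmain
  have h11 : (-1 : MvPolynomial (Fin g) ℚ) ^ (g - 1) * (-1) ^ (g - 1) = 1 := by
    rw [← pow_add, show (g - 1) + (g - 1) = 2 * (g - 1) by omega, pow_mul, neg_one_sq, one_pow]
  have hfinal : esymm (Fin g) ℚ (g - 1) * esymm (Fin g) ℚ g -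
      (-1 : MvPolynomial (Fin g) ℚ) ^ (g - 1) * psum (Fin g) ℚ (2 * g - 1)
      = (-1 : MvPolynomial (Fin g) ℚ) ^ (g - 1) *
        ((-1 : MvPolynomial (Fin g) ℚ) ^ (g - 1) * esymm (Fin g) ℚ (g - 1) *
          esymm (Fin g) ℚ g - psum (Fin g) ℚ (2 * g - 1)) := by
    linear_combination (-(esymm (Fin g) ℚ (g - 1) * esymm (Fin g) ℚ g)) * h11
  rw [hfinal]
  exact Ideal.mul_mem_left _ _ key
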